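/- Let G be a finite graph with vertex weights in a commutative monoid S, edge weights γ, and linearly ordered edges. Then the V-polynomial (defined by its state sum) admits the spanning forest expansion V(G) = Σ_{F ∈ F(G)} x(F) · (∏_{e∈E(F)} γ_e) · (∏_{e externally active w.r.t. F} (1 + γ_e)), where F(G) is the set of spanning forests (acyclic spanning subgraphs) of G and x(F) = ∏_i x_{c_i} with c_i the sum of the vertex weights in the i-th component of F. -/

import Mathlib

open scoped Classical
open Finset

structure VGraph (V E : Type) where
  ends : E → Sym2 V

namespace VGraph

variable {V E S R : Type} [Fintype V] [Fintype E]

/-- Two vertices are joined by an edge of `A`. -/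
def adjRel (G : VGraph V E) (A : Finset E) (u v : V) : Prop :=
  ∃ e ∈ A, G.ends e = s(u, v)

/-- The setoid on vertices whose classes are the connected components of the
spanning subgraph `(V, A)`. -/
def compSetoid (G : VGraph V E) (A : Finset E) : Setoid V :=
  ⟨Relation.EqvGen (G.adjRel A), Relation.EqvGen.is_equivalence _⟩

/-- The connected components of the spanning subgraph `(V, A)`. -/
def Comp (G : VGraph V E) (A : Finset E) : Type := Quotient (G.compSetoid A)

noncomputable instance (G : VGraph V E) (A : Finset E) : Fintype (G.Comp A) :=
  @Quotient.fintype V _ (G.compSetoid A) (Classical.decRel _)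

/-- `k(A)`: the number of connected components of the spanning subgraph `(V, A)`. -/
noncomputable def kA (G : VGraph V E) (A : Finset E) : ℕ := Nat.card (G.Comp A)

/-- `u` and `v` are connected in the spanning subgraph `(V, A)`. -/
def Connects (G : VGraph V E) (A : Finset E) (u v : V) : Prop :=
  Relation.EqvGen (G.adjRel A) u v

/-- The endpoints of `e` are connected in the spanning subgraph `(V, A)`. -/
def EndsConnected (G : VGraph V E) (A : Finset E) (e : E) : Prop :=
  ∃ u v, G.ends e = s(u, v) ∧ G.Connects A u v

def IsLoop (G : VGraph V E) (e : E) : Prop := (G.ends e).IsDiag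

/-- `(V, A)` is a forest (acyclic spanning subgraph): every edge of `A` is a bridge of it. -/
def IsForest (G : VGraph V E) (A : Finset E) : Prop :=
  ∀ e ∈ A, ¬ G.EndsConnected (A.erase e) e

/-- All vertices are pairwise connected using edges of `A`. -/
def ConnectsAll (G : VGraph V E) (A : Finset E) : Prop := ∀ u v, G.Connects A u v

/-- A maximal spanning forest: a forest restricting to a spanning tree of each
connected component of `G`. -/
def IsSpanningTree (G : VGraph V E) (T : Finset E) : Prop :=
  G.IsForest T ∧ ∀ u v, G.Connects T u v ↔ G.Connects Finset.univ u v

/-- `e ∈ T` is internally active: `e` is minimal in the cut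
`{f : (T - e) ∪ {f} ∈ 𝒯(G)}`. -/
def IntActive [LinearOrder E] (G : VGraph V E) (T : Finset E) (e : E) : Prop :=
  e ∈ T ∧ ∀ f, G.IsSpanningTree (insert f (T.erase e)) → e ≤ f

/-- The edge set of the unique cycle of `T ∪ {e}` (when it exists):
`e` together with those `f ∈ T` whose removal disconnects the ends of `e`. -/
noncomputable def cycleEdges (G : VGraph V E) (T : Finset E) (e : E) : Finset E :=
  insert e (T.filter fun f => ¬ G.EndsConnected (T.erase f) e)

/-- `e ∉ T` is externally active: `T ∪ {e}` contains a cycle through `e` and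
`e` is the minimal edge of that cycle. -/
def ExtActive [LinearOrder E] (G : VGraph V E) (T : Finset E) (e : E) : Prop :=
  e ∉ T ∧ G.EndsConnected T e ∧ ∀ f ∈ G.cycleEdges T e, e ≤ f

/-- The vertex set of the component `c` of `(V, A)`. -/
noncomputable def compVerts (G : VGraph V E) (A : Finset E) (c : G.Comp A) : Finset V :=
  Finset.univ.filter fun v => (Quotient.mk (G.compSetoid A) v) = c

/-- The total vertex weight of the component `c` of `(V, A)`. -/
noncomputable def compWeight [AddCommMonoid S] (G : VGraph V E) (A : Finset E)
    (ω : V → S) (c : G.Comp A) : S :=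
  ∑ v ∈ G.compVerts A c, ω v

/-- The V-polynomial, defined by its state sum. -/
noncomputable def Vpoly [AddCommMonoid S] [CommRing R] (G : VGraph V E)
    (ω : V → S) (γ : E → R) : MvPolynomial S R :=
  ∑ A : Finset E, (∏ c : G.Comp A, MvPolynomial.X (G.compWeight A ω c)) *
    MvPolynomial.C (∏ e ∈ A, γ e)

/-- The multivariate Tutte polynomial `Z_T(G; q, γ)` as a polynomial in `q`. -/
noncomputable def ZT [CommRing R] (G : VGraph V E) (γ : E → R) : Polynomial R :=
  ∑ A : Finset E, Polynomial.X ^ (G.kA A) * Polynomial.C (∏ e ∈ A, γ e)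

/-- Deletion of the edge `e`. -/
def del (G : VGraph V E) (e : E) : VGraph V {f : E // f ≠ e} := ⟨fun f => G.ends f.1⟩

/-- Contraction of the edge `e`: vertices are the components of `(V, {e})`. -/
noncomputable def contract (G : VGraph V E) (e : E) : VGraph (G.Comp {e}) {f : E // f ≠ e} :=
  ⟨fun f => (G.ends f.1).map (Quotient.mk (G.compSetoid {e}))⟩

/-- The forest `T` with the edges of `B` contracted: vertices are the components
of `(V, B)` and edges are `T \ B`. -/
noncomputable def contractIn (G : VGraph V E) (T B : Finset E) :
    VGraph (G.Comp B) ↥(T \ B : Finset E) :=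
  ⟨fun f => (G.ends f.1).map (Quotient.mk (G.compSetoid B))⟩

/-- The edges of `G` with both ends inside `P`. -/
noncomputable def edgesIn (G : VGraph V E) (P : Finset V) : Finset E :=
  Finset.univ.filter fun e => ∀ v ∈ G.ends e, v ∈ P

/-- The subgraph of `G` induced by the vertex set `P`. -/
noncomputable def induce (G : VGraph V E) (P : Finset V) : VGraph ↥P ↥(G.edgesIn P) :=
  ⟨fun e => (G.ends e.1).pmap (fun v hv => (⟨v, hv⟩ : ↥P))
    (by have he := e.2; simp only [edgesIn, Finset.mem_filter] at he; exact he.2)⟩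

/-- The block `B` induces a connected subgraph of `G`. -/
def BlockConnected (G : VGraph V E) (B : Finset V) : Prop :=
  ∀ u ∈ B, ∀ v ∈ B, Relation.EqvGen (G.adjRel (G.edgesIn B)) u v

/-- A connected partition of `V(G)`: every vertex lies in exactly one block,
blocks are nonempty, and each block induces a connected subgraph. -/
def IsConnectedPartition (G : VGraph V E) (P : Finset (Finset V)) : Prop :=
  (∀ B ∈ P, B.Nonempty) ∧ (∀ v : V, ∃! B, B ∈ P ∧ v ∈ B) ∧ ∀ B ∈ P, G.BlockConnected B

/-- The partition `Π(A)` of `V(G)` into the components of `(V, A)`. -/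
noncomputable def partitionOf (G : VGraph V E) (A : Finset E) : Finset (Finset V) :=
  Finset.univ.image fun c : G.Comp A => G.compVerts A c

/-- The internally inactive edges of the spanning tree `T`. -/
noncomputable def intInactives [LinearOrder E] (G : VGraph V E) (T : Finset E) : Finset E :=
  T.filter fun e => ¬ G.IntActive T e

/-- The internally active edges of the spanning tree `T`. -/
noncomputable def intActives [LinearOrder E] (G : VGraph V E) (T : Finset E) : Finset E :=
  T.filter fun e => G.IntActive T e

/-- The externally active edges w.r.t. the spanning tree / forest `T`. -/
noncomputable def extActives [LinearOrder E] (G : VGraph V E) (T : Finset E) : Finset E :=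
  Finset.univ.filter fun e => G.ExtActive T e

/-- Kronecker delta `δ(σ_i, σ_j)` for the two ends of the edge `e`. -/
noncomputable def edgeDelta (G : VGraph V E) {q : ℕ} (σ : V → Fin q) (e : E) : ℂ :=
  Sym2.lift ⟨fun u v => if σ u = σ v then 1 else 0, fun u v => by simp [eq_comm]⟩ (G.ends e)

/-- The Potts partition function with variable interactions `J` and
field vectors `M`. -/
noncomputable def Zext (G : VGraph V E) (q : ℕ) (β : ℂ) (J : E → ℂ) (M : V → Fin q → ℂ) : ℂ :=
  ∑ σ : V → Fin q, Complex.exp (β * ((∑ e : E, J e * G.edgeDelta σ e) +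
    ∑ v : V, ∑ α : Fin q, M v α * (if α = σ v then 1 else 0)))

/-- The Potts partition function with constant interaction `J` and constant
field `H` favouring the first spin. -/
noncomputable def ZconstField (G : VGraph V E) (q : ℕ) (β J H : ℂ) : ℂ :=
  ∑ σ : V → Fin q, Complex.exp (β * (J * (∑ e : E, G.edgeDelta σ e) +
    H * ∑ v : V, (if (σ v : ℕ) = 0 then (1 : ℂ) else 0)))

/-- The zero-field Potts partition function with constant interaction `J`. -/
noncomputable def Zzero (G : VGraph V E) (q : ℕ) (β J : ℂ) : ℂ :=
  ∑ σ : V → Fin q, Complex.exp (β * J * ∑ e : E, G.edgeDelta σ e)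

end VGraph


section AuxProof

set_option linter.unusedSectionVars false

attribute [local instance 2000] Classical.propDecidable

namespace VGraph

variable {V E : Type} [Fintype V] [Fintype E] (G : VGraph V E)

lemma exists_ends (f : E) : ∃ x y, G.ends f = s(x, y) :=
  Sym2.exists.mp ⟨G.ends f, rfl⟩

lemma connects_of_adj {A : Finset E} {e : E} {u v : V} (he : e ∈ A)
    (h : G.ends e = s(u, v)) : G.Connects A u v :=
  Relation.EqvGen.rel u v ⟨e, he, h⟩

lemma connects_refl (A : Finset E) (u : V) : G.Connects A u u := Relation.EqvGen.refl u

lemma conn_symm {A : Finset E} {u v : V} (h : G.Connects A u v) : G.Connects A v u :=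
  Relation.EqvGen.symm u v h

lemma conn_trans {A : Finset E} {u v w : V} (h1 : G.Connects A u v)
    (h2 : G.Connects A v w) : G.Connects A u w :=
  Relation.EqvGen.trans u v w h1 h2

lemma connects_of_ends_eq {B : Finset E} {f : E} {u v : V} (h : G.EndsConnected B f)
    (hf : G.ends f = s(u, v)) : G.Connects B u v := by
  obtain ⟨a, b, hab, hc⟩ := h
  rw [hf] at hab
  rcases Sym2.eq_iff.1 hab with ⟨rfl, rfl⟩ | ⟨rfl, rfl⟩
  · exact hc
  · exact G.conn_symm hc

lemma connects_subst {A B : Finset E} (h : ∀ f ∈ A, G.EndsConnected B f) {u v : V}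
    (hc : G.Connects A u v) : G.Connects B u v := by
  have hc' : Relation.EqvGen (G.adjRel A) u v := hc
  clear hc
  induction hc' with
  | rel x y hxy =>
    obtain ⟨e, he, hends⟩ := hxy
    exact G.connects_of_ends_eq (h e he) hends
  | refl x => exact G.connects_refl B x
  | symm x y _ ih => exact G.conn_symm ih
  | trans x y z _ _ ih1 ih2 => exact G.conn_trans ih1 ih2

lemma endsConnected_of_mem {B : Finset E} {f : E} (hf : f ∈ B) : G.EndsConnected B f := by
  obtain ⟨x, y, h⟩ := G.exists_ends f
  exact ⟨x, y, h, G.connects_of_adj hf h⟩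

lemma connects_mono {A B : Finset E} (h : A ⊆ B) {u v : V} (hc : G.Connects A u v) :
    G.Connects B u v :=
  G.connects_subst (fun f hf => G.endsConnected_of_mem (h hf)) hc

lemma connects_split {B : Finset E} {g : E} {p q : V} (hg : G.ends g = s(p, q)) {u v : V}
    (h : G.Connects B u v) :
    G.Connects (B.erase g) u v ∨ (G.Connects (B.erase g) u p ∧ G.Connects (B.erase g) q v)
      ∨ (G.Connects (B.erase g) u q ∧ G.Connects (B.erase g) p v) := by
  have h' : Relation.EqvGen (G.adjRel B) u v := h
  clear h
  induction h' with
  | rel x y hxy =>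
    obtain ⟨e, he, hends⟩ := hxy
    by_cases hge : e = g
    · subst hge
      rw [hg] at hends
      rcases Sym2.eq_iff.1 hends with ⟨rfl, rfl⟩ | ⟨rfl, rfl⟩
      · exact Or.inr (Or.inl ⟨G.connects_refl _ _, G.connects_refl _ _⟩)
      · exact Or.inr (Or.inr ⟨G.connects_refl _ _, G.connects_refl _ _⟩)
    · exact Or.inl (G.connects_of_adj (Finset.mem_erase.2 ⟨hge, he⟩) hends)
  | refl x => exact Or.inl (G.connects_refl _ x)
  | symm x y _ ih =>
    rcases ih with h1 | ⟨h1, h2⟩ | ⟨h1, h2⟩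
    · exact Or.inl (G.conn_symm h1)
    · exact Or.inr (Or.inr ⟨G.conn_symm h2, G.conn_symm h1⟩)
    · exact Or.inr (Or.inl ⟨G.conn_symm h2, G.conn_symm h1⟩)
  | trans x y z _ _ ih1 ih2 =>
    rcases ih1 with h1 | ⟨h1a, h1b⟩ | ⟨h1a, h1b⟩ <;>
      rcases ih2 with h2 | ⟨h2a, h2b⟩ | ⟨h2a, h2b⟩
    · exact Or.inl (G.conn_trans h1 h2)
    · exact Or.inr (Or.inl ⟨G.conn_trans h1 h2a, h2b⟩)
    · exact Or.inr (Or.inr ⟨G.conn_trans h1 h2a, h2b⟩)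
    · exact Or.inr (Or.inl ⟨h1a, G.conn_trans h1b h2⟩)
    · exact Or.inr (Or.inl ⟨h1a, h2b⟩)
    · exact Or.inl (G.conn_trans h1a h2b)
    · exact Or.inr (Or.inr ⟨h1a, G.conn_trans h1b h2⟩)
    · exact Or.inl (G.conn_trans h1a h2b)
    · exact Or.inr (Or.inr ⟨h1a, h2b⟩)

lemma exists_minimal_connects {B : Finset E} {u v : V} (h : G.Connects B u v) :
    ∃ B' ⊆ B, G.Connects B' u v ∧ ∀ f ∈ B', ¬ G.Connects (B'.erase f) u v := by
  classical
  induction B using Finset.strongInduction with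
  | _ B ih =>
    by_cases hex : ∃ f ∈ B, G.Connects (B.erase f) u v
    · obtain ⟨f, hf, hc⟩ := hex
      obtain ⟨B', hsub, h1, h2⟩ := ih (B.erase f) (Finset.erase_ssubset hf) hc
      exact ⟨B', hsub.trans (Finset.erase_subset _ _), h1, h2⟩
    · push_neg at hex
      exact ⟨B, Finset.Subset.refl _, h, hex⟩


section MaxForest

variable [LinearOrder E]

/-- The maximal spanning forest of `(V, A)` given by reverse Kruskal: keep `e ∈ A`
iff its ends are not connected by strictly larger edges of `A`. -/
noncomputable def maxForest (G : VGraph V E) (A : Finset E) : Finset E :=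
  A.filter fun e => ¬ G.EndsConnected (A.filter fun f => e < f) e

lemma maxForest_subset (A : Finset E) : G.maxForest A ⊆ A := Finset.filter_subset _ _

lemma connects_filter_maxForest (A : Finset E) :
    ∀ (n : ℕ) (e : E) (u v : V), (A.filter fun f => e < f).card ≤ n →
      G.Connects (A.filter fun f => e < f) u v →
      G.Connects ((G.maxForest A).filter fun f => e < f) u v := by
  intro n
  induction n with
  | zero =>
    intro e u v hcard h
    have hempty : A.filter (fun f => e < f) = ∅ :=
      Finset.card_eq_zero.1 (Nat.le_zero.1 hcard)
    refine G.connects_subst (fun f hf => ?_) h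
    rw [hempty] at hf
    exact absurd hf (Finset.notMem_empty f)
  | succ n ih =>
    intro e u v hcard h
    refine G.connects_subst (fun f hf => ?_) h
    obtain ⟨hfA, hef⟩ := Finset.mem_filter.1 hf
    by_cases hm : f ∈ G.maxForest A
    · exact G.endsConnected_of_mem (Finset.mem_filter.2 ⟨hm, hef⟩)
    · have hEC : G.EndsConnected (A.filter fun g => f < g) f := by
        by_contra hne
        exact hm (Finset.mem_filter.2 ⟨hfA, hne⟩)
      obtain ⟨a, b, hab, hc⟩ := hEC
      have hss : A.filter (fun g => f < g) ⊂ A.filter (fun g => e < g) := by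
        constructor
        · intro g hg
          obtain ⟨hgA, hfg⟩ := Finset.mem_filter.1 hg
          exact Finset.mem_filter.2 ⟨hgA, hef.trans hfg⟩
        · intro hcontra
          have := Finset.mem_filter.1 (hcontra hf)
          exact lt_irrefl f this.2
      have hcard' : (A.filter fun g => f < g).card ≤ n :=
        Nat.lt_succ_iff.1 (lt_of_lt_of_le (Finset.card_lt_card hss) hcard)
      have hc' := ih f a b hcard' hc
      have hmono : (G.maxForest A).filter (fun g => f < g) ⊆
          (G.maxForest A).filter (fun g => e < g) := by
        intro g hg
        obtain ⟨hgM, hfg⟩ := Finset.mem_filter.1 hg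
        exact Finset.mem_filter.2 ⟨hgM, hef.trans hfg⟩
      exact ⟨a, b, hab, G.connects_mono hmono hc'⟩

lemma endsConnected_filter_maxForest {A : Finset E} {e : E}
    (h : G.EndsConnected (A.filter fun f => e < f) e) :
    G.EndsConnected ((G.maxForest A).filter fun f => e < f) e := by
  obtain ⟨u, v, hends, hc⟩ := h
  exact ⟨u, v, hends, G.connects_filter_maxForest A _ e u v le_rfl hc⟩

lemma connects_maxForest {A : Finset E} {u v : V} (h : G.Connects A u v) :
    G.Connects (G.maxForest A) u v := by
  refine G.connects_subst (fun f hfA => ?_) h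
  by_cases hm : f ∈ G.maxForest A
  · exact G.endsConnected_of_mem hm
  · have hEC : G.EndsConnected (A.filter fun g => f < g) f := by
      by_contra hne
      exact hm (Finset.mem_filter.2 ⟨hfA, hne⟩)
    obtain ⟨a, b, hab, hc⟩ := G.endsConnected_filter_maxForest hEC
    exact ⟨a, b, hab, G.connects_mono (Finset.filter_subset _ _) hc⟩

lemma isForest_maxForest (A : Finset E) : G.IsForest (G.maxForest A) := by
  intro e he hEC
  obtain ⟨heA, hne⟩ := Finset.mem_filter.1 he
  obtain ⟨u, v, hends, huv⟩ := hEC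
  obtain ⟨B', hsub, hconn, hmin⟩ := G.exists_minimal_connects huv
  by_cases hex : ∃ f ∈ B', f < e
  · obtain ⟨f0, hf0, hf0e⟩ := hex
    have hBne : B'.Nonempty := ⟨f0, hf0⟩
    set g := B'.min' hBne with hgdef
    have hgB : g ∈ B' := B'.min'_mem hBne
    have hge : g < e := lt_of_le_of_lt (B'.min'_le f0 hf0) hf0e
    have hgM : g ∈ G.maxForest A := Finset.mem_of_mem_erase (hsub hgB)
    obtain ⟨hgA, hgne⟩ := Finset.mem_filter.1 hgM
    apply hgne
    obtain ⟨p, q, hpq⟩ := G.exists_ends g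
    have hBsub : B'.erase g ⊆ A.filter (fun f => g < f) := by
      intro f hf
      obtain ⟨hfg, hfB⟩ := Finset.mem_erase.1 hf
      have hfA : f ∈ A := G.maxForest_subset A (Finset.mem_of_mem_erase (hsub hfB))
      exact Finset.mem_filter.2 ⟨hfA, lt_of_le_of_ne (B'.min'_le f hfB) (Ne.symm hfg)⟩
    have hedge : G.Connects (A.filter fun f => g < f) u v :=
      G.connects_of_adj (Finset.mem_filter.2 ⟨heA, hge⟩) hends
    rcases G.connects_split hpq hconn with hcase | ⟨h1, h2⟩ | ⟨h1, h2⟩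
    · exact absurd hcase (hmin g hgB)
    · exact ⟨p, q, hpq, G.conn_trans (G.conn_trans (G.conn_symm (G.connects_mono hBsub h1))
        hedge) (G.conn_symm (G.connects_mono hBsub h2))⟩
    · exact ⟨p, q, hpq, G.conn_trans (G.conn_trans (G.connects_mono hBsub h2)
        (G.conn_symm hedge)) (G.connects_mono hBsub h1)⟩
  · push_neg at hex
    apply hne
    refine ⟨u, v, hends, G.connects_mono (fun f hf => ?_) hconn⟩
    have hfM : f ∈ G.maxForest A := Finset.mem_of_mem_erase (hsub hf)
    have hfe : f ≠ e := (Finset.mem_erase.1 (hsub hf)).1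
    exact Finset.mem_filter.2 ⟨G.maxForest_subset A hfM,
      lt_of_le_of_ne (hex f hf) (Ne.symm hfe)⟩

lemma extActive_of_not_mem_maxForest {A : Finset E} {e : E} (heA : e ∈ A)
    (he : e ∉ G.maxForest A) : G.ExtActive (G.maxForest A) e := by
  have hEC0 : G.EndsConnected (A.filter fun f => e < f) e := by
    by_contra hne
    exact he (Finset.mem_filter.2 ⟨heA, hne⟩)
  obtain ⟨u, v, hends, hc⟩ := G.endsConnected_filter_maxForest hEC0
  refine ⟨he, ⟨u, v, hends, G.connects_mono (Finset.filter_subset _ _) hc⟩, fun f hf => ?_⟩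
  rcases Finset.mem_insert.1 hf with rfl | hf
  · exact le_rfl
  · simp only [Finset.mem_filter] at hf
    obtain ⟨hfM, hnc⟩ := hf
    by_contra hlt
    push_neg at hlt
    apply hnc
    refine ⟨u, v, hends, G.connects_mono (fun g hg => ?_) hc⟩
    obtain ⟨hgM, heg⟩ := Finset.mem_filter.1 hg
    exact Finset.mem_erase.2 ⟨ne_of_gt (hlt.trans heg), hgM⟩

end MaxForest

section Forest

variable [LinearOrder E]

lemma connects_filter_of_extActive {F : Finset E} (hF : G.IsForest F) {e : E}
    (h : G.ExtActive F e) {u v : V} (hends : G.ends e = s(u, v)) :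
    G.Connects (F.filter fun f => e < f) u v := by
  obtain ⟨heF, hEC, hmin⟩ := h
  have huv : G.Connects F u v := G.connects_of_ends_eq hEC hends
  obtain ⟨B', hsub, hconn, hminB⟩ := G.exists_minimal_connects huv
  refine G.connects_mono (fun f hf => ?_) hconn
  refine Finset.mem_filter.2 ⟨hsub hf, ?_⟩
  by_contra hnlt
  push_neg at hnlt
  have hfF : f ∈ F := hsub hf
  have hfe : f ≠ e := fun hfeq => heF (hfeq ▸ hfF)
  have hflt : f < e := lt_of_le_of_ne hnlt hfe
  have hEC2 : G.EndsConnected (F.erase f) e := by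
    by_contra hne
    have hfc : f ∈ G.cycleEdges F e := by
      unfold cycleEdges
      simp only [Finset.mem_insert, Finset.mem_filter]
      exact Or.inr ⟨hfF, hne⟩
    exact absurd (hmin f hfc) (not_le.2 hflt)
  have huv2 : G.Connects (F.erase f) u v := G.connects_of_ends_eq hEC2 hends
  obtain ⟨p, q, hpq⟩ := G.exists_ends f
  have hBsub : B'.erase f ⊆ F.erase f := Finset.erase_subset_erase f hsub
  rcases G.connects_split hpq hconn with hcase | ⟨h1, h2⟩ | ⟨h1, h2⟩
  · exact hminB f hf hcase
  · exact hF f hfF ⟨p, q, hpq, G.conn_trans (G.conn_trans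
      (G.conn_symm (G.connects_mono hBsub h1)) huv2) (G.conn_symm (G.connects_mono hBsub h2))⟩
  · exact hF f hfF ⟨p, q, hpq, G.conn_trans (G.conn_trans
      (G.connects_mono hBsub h2) (G.conn_symm huv2)) (G.connects_mono hBsub h1)⟩

lemma maxForest_union {F X : Finset E} (hF : G.IsForest F)
    (hX : ∀ e ∈ X, G.ExtActive F e) : G.maxForest (F ∪ X) = F := by
  ext e
  constructor
  · intro he
    obtain ⟨heFX, hne⟩ := Finset.mem_filter.1 he
    rcases Finset.mem_union.1 heFX with heF | heX
    · exact heF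
    · exfalso
      apply hne
      obtain ⟨u, v, hends⟩ := G.exists_ends e
      refine ⟨u, v, hends, G.connects_mono (fun g hg => ?_)
        (G.connects_filter_of_extActive hF (hX e heX) hends)⟩
      obtain ⟨hgF, heg⟩ := Finset.mem_filter.1 hg
      exact Finset.mem_filter.2 ⟨Finset.mem_union_left X hgF, heg⟩
  · intro heF
    refine Finset.mem_filter.2 ⟨Finset.mem_union_left X heF, ?_⟩
    rintro ⟨u, v, hends, huv⟩
    refine hF e heF ⟨u, v, hends, G.connects_subst (fun f hf => ?_) huv⟩
    obtain ⟨hfFX, hef⟩ := Finset.mem_filter.1 hf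
    have hfe : f ≠ e := ne_of_gt hef
    rcases Finset.mem_union.1 hfFX with hfF | hfX
    · exact G.endsConnected_of_mem (Finset.mem_erase.2 ⟨hfe, hfF⟩)
    · obtain ⟨p, q, hpq⟩ := G.exists_ends f
      refine ⟨p, q, hpq, G.connects_mono (fun g hg => ?_)
        (G.connects_filter_of_extActive hF (hX f hfX) hpq)⟩
      obtain ⟨hgF, hfg⟩ := Finset.mem_filter.1 hg
      exact Finset.mem_erase.2 ⟨ne_of_gt (hef.trans hfg), hgF⟩

end Forest

lemma connects_union_iff {F X : Finset E} (hX : ∀ e ∈ X, G.EndsConnected F e) (u v : V) :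
    G.Connects (F ∪ X) u v ↔ G.Connects F u v := by
  constructor
  · refine fun h => G.connects_subst (fun f hf => ?_) h
    rcases Finset.mem_union.1 hf with h' | h'
    · exact G.endsConnected_of_mem h'
    · exact hX f h'
  · exact G.connects_mono Finset.subset_union_left

lemma mem_partitionOf {A : Finset E} {P : Finset V} :
    P ∈ G.partitionOf A ↔ ∃ v : V, P = Finset.univ.filter fun w => G.Connects A w v := by
  unfold partitionOf
  simp only [Finset.mem_image, Finset.mem_univ, true_and]
  constructor
  · rintro ⟨c, rfl⟩
    obtain ⟨v, rfl⟩ := c.exists_rep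
    refine ⟨v, ?_⟩
    unfold compVerts
    ext w
    simp only [Finset.mem_filter, Finset.mem_univ, true_and]
    constructor
    · intro h
      exact Quotient.exact h
    · intro h
      exact Quotient.sound h
  · rintro ⟨v, rfl⟩
    refine ⟨Quotient.mk (G.compSetoid A) v, ?_⟩
    unfold compVerts
    ext w
    simp only [Finset.mem_filter, Finset.mem_univ, true_and]
    constructor
    · intro h
      exact Quotient.exact h
    · intro h
      exact Quotient.sound h

lemma partitionOf_congr {A B : Finset E}
    (h : ∀ u v : V, G.Connects A u v ↔ G.Connects B u v) :
    G.partitionOf A = G.partitionOf B := by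
  ext P
  simp only [mem_partitionOf]
  constructor
  · rintro ⟨v, rfl⟩
    exact ⟨v, by ext w; simp [h w v]⟩
  · rintro ⟨v, rfl⟩
    exact ⟨v, by ext w; simp [h w v]⟩

lemma prod_comp {S R : Type} [AddCommMonoid S] [CommRing R] (A : Finset E) (ω : V → S) :
    (∏ c : G.Comp A, (MvPolynomial.X (G.compWeight A ω c) : MvPolynomial S R)) =
      ∏ P ∈ G.partitionOf A, MvPolynomial.X (∑ v ∈ P, ω v) := by
  have hinj : ∀ c ∈ (Finset.univ : Finset (G.Comp A)), ∀ c' ∈ Finset.univ,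
      G.compVerts A c = G.compVerts A c' → c = c' := by
    intro c _ c' _ hcc
    obtain ⟨v, rfl⟩ := c.exists_rep
    have hv : v ∈ G.compVerts A (Quotient.mk (G.compSetoid A) v) := by
      unfold compVerts
      simp only [Finset.mem_filter, Finset.mem_univ, true_and]
    rw [hcc] at hv
    unfold compVerts at hv
    simp only [Finset.mem_filter, Finset.mem_univ, true_and] at hv
    exact hv
  have himg : G.partitionOf A = Finset.univ.image (fun c : G.Comp A => G.compVerts A c) := by
    unfold partitionOf
    congr!
  rw [himg, Finset.prod_image hinj]
  rfl


end VGraph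

end AuxProof

section MainProof

attribute [local instance 2000] Classical.propDecidable

/-- Spanning forest expansion of the V-polynomial:
`V(G) = Σ_{F∈𝓕(G)} x(F) (∏_{e∈F} γ_e)(∏_{e∈EA(F)} (1+γ_e))`. -/
theorem Vpoly_spanning_forest_expansion {V E S R : Type} [Fintype V] [Fintype E]
    [LinearOrder E] [AddCommMonoid S] [CommRing R] (G : VGraph V E)
    (ω : V → S) (γ : E → R) :
    G.Vpoly ω γ =
      ∑ F ∈ Finset.univ.filter (fun F => G.IsForest F),
        (∏ c : G.Comp F, MvPolynomial.X (G.compWeight F ω c)) *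
        MvPolynomial.C (∏ e ∈ F, γ e) *
        ∏ e ∈ G.extActives F, (1 + MvPolynomial.C (γ e)) := by
  have hCprod : ∀ F : Finset E,
      (∏ e ∈ G.extActives F, (1 + MvPolynomial.C (γ e)) : MvPolynomial S R)
        = ∑ X ∈ (G.extActives F).powerset, MvPolynomial.C (∏ e ∈ X, γ e) := by
    intro F
    have h1 : ∀ e ∈ G.extActives F,
        (1 + MvPolynomial.C (γ e) : MvPolynomial S R) = MvPolynomial.C (γ e) + 1 := by
      intro e _; ring
    rw [Finset.prod_congr rfl h1, Finset.prod_add]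
    refine Finset.sum_congr rfl fun X _ => ?_
    simp [map_prod]
  have hmain :
      (∑ A : Finset E, (∏ P ∈ G.partitionOf A, (MvPolynomial.X (∑ v ∈ P, ω v) :
          MvPolynomial S R)) * MvPolynomial.C (∏ e ∈ A, γ e)) =
      ∑ p ∈ (Finset.univ.filter (fun F => G.IsForest F)).sigma
          (fun F => (G.extActives F).powerset),
        (∏ P ∈ G.partitionOf p.1, MvPolynomial.X (∑ v ∈ P, ω v)) *
          MvPolynomial.C (∏ e ∈ p.1, γ e) * MvPolynomial.C (∏ e ∈ p.2, γ e) := by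
    refine (Finset.sum_nbij' (i := fun p : (Σ _ : Finset E, Finset E) => p.1 ∪ p.2)
      (j := fun A => ⟨G.maxForest A, A \ G.maxForest A⟩) ?_ ?_ ?_ ?_ ?_).symm
    · intro p _
      exact Finset.mem_univ _
    · intro A _
      refine Finset.mem_sigma.2 ⟨Finset.mem_filter.2 ⟨Finset.mem_univ _,
        G.isForest_maxForest A⟩, Finset.mem_powerset.2 fun e he => ?_⟩
      obtain ⟨heA, heM⟩ := Finset.mem_sdiff.1 he
      exact Finset.mem_filter.2 ⟨Finset.mem_univ _, G.extActive_of_not_mem_maxForest heA heM⟩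
    · intro p hp
      obtain ⟨hpF, hpX⟩ := Finset.mem_sigma.1 hp
      have hF : G.IsForest p.1 := (Finset.mem_filter.1 hpF).2
      have hX : ∀ e ∈ p.2, G.ExtActive p.1 e := fun e he =>
        (Finset.mem_filter.1 (Finset.mem_powerset.1 hpX he)).2
      have hdisj : Disjoint p.1 p.2 :=
        Finset.disjoint_left.2 fun a ha ha' => (hX a ha').1 ha
      have hmf : G.maxForest (p.1 ∪ p.2) = p.1 := G.maxForest_union hF hX
      obtain ⟨F, X⟩ := p
      simp only at hmf hdisj ⊢
      rw [hmf, Finset.union_sdiff_cancel_left hdisj]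
    · intro A _
      exact Finset.union_sdiff_of_subset (G.maxForest_subset A)
    · intro p hp
      obtain ⟨hpF, hpX⟩ := Finset.mem_sigma.1 hp
      have hF : G.IsForest p.1 := (Finset.mem_filter.1 hpF).2
      have hX : ∀ e ∈ p.2, G.ExtActive p.1 e := fun e he =>
        (Finset.mem_filter.1 (Finset.mem_powerset.1 hpX he)).2
      have hdisj : Disjoint p.1 p.2 :=
        Finset.disjoint_left.2 fun a ha ha' => (hX a ha').1 ha
      have hpart : G.partitionOf (p.1 ∪ p.2) = G.partitionOf p.1 :=
        G.partitionOf_congr (G.connects_union_iff (fun e he => (hX e he).2.1))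
      rw [hpart, Finset.prod_union hdisj, map_mul, mul_assoc]
  calc G.Vpoly ω γ
      = ∑ A : Finset E, (∏ P ∈ G.partitionOf A, (MvPolynomial.X (∑ v ∈ P, ω v) :
          MvPolynomial S R)) * MvPolynomial.C (∏ e ∈ A, γ e) := by
        unfold VGraph.Vpoly
        exact Finset.sum_congr rfl fun A _ => by rw [G.prod_comp]
    _ = ∑ p ∈ (Finset.univ.filter (fun F => G.IsForest F)).sigma
          (fun F => (G.extActives F).powerset),
        (∏ P ∈ G.partitionOf p.1, MvPolynomial.X (∑ v ∈ P, ω v)) *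
          MvPolynomial.C (∏ e ∈ p.1, γ e) * MvPolynomial.C (∏ e ∈ p.2, γ e) := hmain
    _ = ∑ F ∈ Finset.univ.filter (fun F => G.IsForest F), ∑ X ∈ (G.extActives F).powerset,
        (∏ P ∈ G.partitionOf F, MvPolynomial.X (∑ v ∈ P, ω v)) *
          MvPolynomial.C (∏ e ∈ F, γ e) * MvPolynomial.C (∏ e ∈ X, γ e) :=
        Finset.sum_sigma _ _ _
    _ = ∑ F ∈ Finset.univ.filter (fun F => G.IsForest F),
        (∏ c : G.Comp F, MvPolynomial.X (G.compWeight F ω c)) *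
        MvPolynomial.C (∏ e ∈ F, γ e) *
        ∏ e ∈ G.extActives F, (1 + MvPolynomial.C (γ e)) := by
        refine Finset.sum_congr rfl fun F _ => ?_
        rw [hCprod, Finset.mul_sum, G.prod_comp]

end MainProof
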